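/- Every density operator ρ_N on a finite-dimensional Hilbert space with H_min(N)_ρ = −log λ_max(ρ_N) ≥ k (k = log of an integer 2^k dividing considerations aside, assume 2^k integer) can be written as a convex combination ρ_N = Σ_j p_j ρ_N^j of flat k-sources, i.e., density operators ρ_N^j each having exactly 2^k nonzero eigenvalues all equal to 2^{−k}. -/

import Mathlib

open Matrix Finset
open scoped ComplexOrder

lemma flat_vec_decomp {n : Type} [Fintype n] [DecidableEq n] (K : ℕ) (hK : 0 < K)
    (f : n → ℝ) (h0 : ∀ i, 0 ≤ f i) (h1 : ∀ i, f i ≤ (K:ℝ)⁻¹) (hs : ∑ i, f i = 1) :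
    ∃ (s : ℕ) (p : Fin s → ℝ) (T : Fin s → Finset n),
      (∀ j, 0 ≤ p j) ∧ (∑ j, p j = 1) ∧ (∀ j, (T j).card = K) ∧
      ∀ i, f i = ∑ j, p j * (K:ℝ)⁻¹ * (if i ∈ T j then 1 else 0) := by
  have hKR : (0:ℝ) < (K:ℝ) := by exact_mod_cast hK
  have hKinv : (0:ℝ) < (K:ℝ)⁻¹ := by positivity
  set m := (univ.filter fun i => f i ≠ 0 ∧ f i ≠ (K:ℝ)⁻¹).card with hm
  clear_value m
  induction m using Nat.strong_induction_on generalizing f with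
  | _ m ih =>
  rcases Nat.eq_zero_or_pos m with h0m | hpos
  · rw [hm] at h0m
    rw [Finset.card_eq_zero, Finset.filter_eq_empty_iff] at h0m
    have hdi : ∀ i, f i = 0 ∨ f i = (K:ℝ)⁻¹ := by
      intro i
      by_contra h
      push_neg at h
      exact (h0m (mem_univ i)) ⟨h.1, h.2⟩
    set T : Finset n := univ.filter fun i => f i ≠ 0 with hT
    have hfT : ∀ i, f i = if i ∈ T then (K:ℝ)⁻¹ else 0 := by
      intro i
      rcases hdi i with h | h <;> simp [hT, h, hKinv.ne']
    have hsum : ∑ i, f i = T.card * (K:ℝ)⁻¹ := by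
      rw [Finset.sum_congr rfl fun i _ => hfT i]
      simp [Finset.sum_ite_mem, mul_comm]
    have hcard' : T.card = K := by
      have h : (T.card : ℝ) * (K:ℝ)⁻¹ = 1 := by rw [← hsum, hs]
      field_simp at h
      exact_mod_cast h
    refine ⟨1, fun _ => 1, fun _ => T, fun _ => zero_le_one, by simp, fun _ => hcard', ?_⟩
    intro i
    simp [hfT i]
  · 
      classical
      set A : Finset n := univ.filter (fun i => f i = (K:ℝ)⁻¹) with hA
      set B : Finset n := univ.filter (fun i => f i ≠ 0 ∧ f i ≠ (K:ℝ)⁻¹) with hB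
      have hmemA : ∀ i, i ∈ A ↔ f i = (K:ℝ)⁻¹ := by intro i; simp [hA]
      have hmemB : ∀ i, i ∈ B ↔ (f i ≠ 0 ∧ f i ≠ (K:ℝ)⁻¹) := by intro i; simp [hB]
      have hBne : B.Nonempty := by rw [← Finset.card_pos, ← hm]; exact hpos
      have hABdisj : Disjoint A B := by
        rw [Finset.disjoint_left]
        intro i hiA hiB
        exact ((hmemB i).1 hiB).2 ((hmemA i).1 hiA)
      have hBpos : ∀ i ∈ B, 0 < f i := fun i hi =>
        lt_of_le_of_ne (h0 i) (Ne.symm ((hmemB i).1 hi).1)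
      have hBlt : ∀ i ∈ B, f i < (K:ℝ)⁻¹ := fun i hi =>
        lt_of_le_of_ne (h1 i) ((hmemB i).1 hi).2
      have hzero : ∀ i, i ∉ A ∪ B → f i = 0 := by
        intro i hi
        rw [Finset.mem_union] at hi
        push_neg at hi
        have h1' := (hmemA i).not.1 hi.1
        have h2' := (hmemB i).not.1 hi.2
        push_neg at h2'
        by_contra hne
        exact h1' (h2' hne)
      have hsupp : ∑ i ∈ A ∪ B, f i = 1 := by
        rw [← hs]
        exact Finset.sum_subset (Finset.subset_univ _) (fun i _ hi => hzero i hi)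
      have hsumA : ∑ i ∈ A, f i = A.card * (K:ℝ)⁻¹ := by
        rw [Finset.sum_congr rfl fun i hi => (hmemA i).1 hi, Finset.sum_const, nsmul_eq_mul]
      have hsumBpos : 0 < ∑ i ∈ B, f i := Finset.sum_pos hBpos hBne
      have hsumBlt : ∑ i ∈ B, f i < B.card * (K:ℝ)⁻¹ := by
        calc ∑ i ∈ B, f i < ∑ _i ∈ B, (K:ℝ)⁻¹ := Finset.sum_lt_sum_of_nonempty hBne hBlt
        _ = B.card * (K:ℝ)⁻¹ := by rw [Finset.sum_const, nsmul_eq_mul]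
      have hunion : ∑ i ∈ A ∪ B, f i = ∑ i ∈ A, f i + ∑ i ∈ B, f i := Finset.sum_union hABdisj
      have hAcard_lt : A.card < K := by
        have : (A.card : ℝ) * (K:ℝ)⁻¹ < 1 := by
          rw [hunion] at hsupp; rw [hsumA] at hsupp; linarith
        have h2 : (A.card : ℝ) < K := by
          rw [← mul_lt_mul_iff_left₀ hKinv]
          rw [mul_inv_cancel₀ hKR.ne'] at *
          linarith
        exact_mod_cast h2
      have hKlt : K < A.card + B.card := by
        have h2 : (1:ℝ) < (A.card + B.card) * (K:ℝ)⁻¹ := by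
          rw [hunion, hsumA] at hsupp
          have := hsumBlt
          rw [add_mul]; linarith
        have h3 : (K:ℝ) < A.card + B.card := by
          rw [← mul_lt_mul_iff_left₀ hKinv, mul_inv_cancel₀ hKR.ne']
          linarith
        exact_mod_cast h3
      -- choose C ⊆ B of size K - |A|
      obtain ⟨C, hCB, hCcard⟩ := Finset.exists_subset_card_eq (show K - A.card ≤ B.card by omega)
      set S : Finset n := A ∪ C with hS
      have hACdisj : Disjoint A C := hABdisj.mono_right hCB
      have hScard : S.card = K := by
        rw [hS, Finset.card_union_of_disjoint hACdisj, hCcard]; omega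
      have hCne : C.Nonempty := by rw [← Finset.card_pos, hCcard]; omega
      have hSne : S.Nonempty := hCne.mono (Finset.subset_union_right)
      have hSpos : ∀ i ∈ S, 0 < f i := by
        intro i hi
        rcases Finset.mem_union.1 hi with h | h
        · rw [(hmemA i).1 h]; exact hKinv
        · exact hBpos i (hCB h)
      -- complement nonempty
      have hcompl_ne : (univ \ S).Nonempty := by
        rw [Finset.sdiff_nonempty]
        intro habs
        have : Fintype.card n ≤ S.card := by
          simpa using Finset.card_le_card habs
        have hABcard : A.card + B.card = (A ∪ B).card :=
          (Finset.card_union_of_disjoint hABdisj).symm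
        have := Finset.card_le_card (Finset.subset_univ (A ∪ B))
        simp only [Finset.card_univ] at *
        omega
      -- min over S and max over complement
      set a : ℝ := S.inf' hSne f with ha
      set b : ℝ := (univ \ S).sup' hcompl_ne f with hb
      have ha_pos : 0 < a := by
        rw [ha, Finset.lt_inf'_iff]
        exact hSpos
      have ha_lt : a < (K:ℝ)⁻¹ := by
        obtain ⟨c, hc⟩ := hCne
        exact lt_of_le_of_lt (Finset.inf'_le f (Finset.mem_union_right _ hc)) (hBlt c (hCB hc))
      have hb_lt : b < (K:ℝ)⁻¹ := by
        rw [hb, Finset.sup'_lt_iff]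
        intro i hi
        have hiA : i ∉ A := fun h => (Finset.mem_sdiff.1 hi).2 (Finset.mem_union_left _ h)
        exact lt_of_le_of_ne (h1 i) (fun h => hiA ((hmemA i).2 h))
      have hb_nonneg : 0 ≤ b := by
        obtain ⟨i, hi⟩ := hcompl_ne
        exact le_trans (h0 i) (Finset.le_sup' f hi)
      set p : ℝ := min ((K:ℝ) * a) (1 - (K:ℝ) * b) with hp
      have hKb_lt : (K:ℝ) * b < 1 := by
        calc (K:ℝ) * b < (K:ℝ) * (K:ℝ)⁻¹ := by exact mul_lt_mul_of_pos_left hb_lt hKR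
        _ = 1 := mul_inv_cancel₀ hKR.ne'
      have hp_pos : 0 < p := lt_min (by positivity) (by linarith)
      have hp_lt1 : p < 1 := by
        have : p ≤ (K:ℝ) * a := min_le_left _ _
        have h2 : (K:ℝ) * a < 1 := by
          calc (K:ℝ) * a < (K:ℝ) * (K:ℝ)⁻¹ := mul_lt_mul_of_pos_left ha_lt hKR
          _ = 1 := mul_inv_cancel₀ hKR.ne'
        linarith
      have h1p : 0 < 1 - p := by linarith
      have hpa : p * (K:ℝ)⁻¹ ≤ a := by
        have h := min_le_left ((K:ℝ) * a) (1 - (K:ℝ) * b)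
        rw [← hp] at h
        calc p * (K:ℝ)⁻¹ ≤ ((K:ℝ) * a) * (K:ℝ)⁻¹ := by
              exact mul_le_mul_of_nonneg_right h hKinv.le
        _ = a := by field_simp
      have hpb : b ≤ (1 - p) * (K:ℝ)⁻¹ := by
        have h := min_le_right ((K:ℝ) * a) (1 - (K:ℝ) * b)
        rw [← hp] at h
        have hKb : (K:ℝ) * b ≤ 1 - p := by linarith
        calc b = ((K:ℝ) * b) * (K:ℝ)⁻¹ := by field_simp
        _ ≤ (1 - p) * (K:ℝ)⁻¹ := mul_le_mul_of_nonneg_right hKb hKinv.le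
      set g : n → ℝ := fun i => (f i - (if i ∈ S then p * (K:ℝ)⁻¹ else 0)) / (1 - p) with hg
      have hg_eq : ∀ i, f i = (1 - p) * g i + (if i ∈ S then p * (K:ℝ)⁻¹ else 0) := by
        intro i
        rw [hg]
        field_simp
        ring
      have hg0 : ∀ i, 0 ≤ g i := by
        intro i
        rw [hg]
        apply div_nonneg _ h1p.le
        split_ifs with h
        · have := Finset.inf'_le f h
          rw [← ha] at this
          linarith
        · linarith [h0 i]
      have hg1 : ∀ i, g i ≤ (K:ℝ)⁻¹ := by
        intro i
        rw [hg, div_le_iff₀ h1p]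
        split_ifs with h
        · have := h1 i
          nlinarith
        · have hle : f i ≤ b := Finset.le_sup' f (Finset.mem_sdiff.2 ⟨Finset.mem_univ i, h⟩)
          calc f i - 0 ≤ b := by linarith
          _ ≤ (1 - p) * (K:ℝ)⁻¹ := hpb
          _ = (K:ℝ)⁻¹ * (1 - p) := mul_comm _ _
      have hgs : ∑ i, g i = 1 := by
        rw [hg]
        rw [← Finset.sum_div]
        rw [Finset.sum_sub_distrib, hs]
        rw [Finset.sum_ite_mem, Finset.univ_inter, Finset.sum_const, hScard, nsmul_eq_mul]
        have : (K:ℝ) * (p * (K:ℝ)⁻¹) = p := by field_simp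
        rw [this, div_self h1p.ne']
      -- the measure strictly decreases
      set Mg : Finset n := univ.filter (fun i => g i ≠ 0 ∧ g i ≠ (K:ℝ)⁻¹) with hMg
      have hsub : Mg ⊆ B := by
        intro i hi
        rw [hMg, Finset.mem_filter] at hi
        rw [hmemB]
        constructor
        · intro hfi
          have hiS : i ∉ S := fun h => (hSpos i h).ne' hfi
          apply hi.2.1
          rw [hg]
          simp [hfi, hiS]
        · intro hfi
          have hiS : i ∈ S := Finset.mem_union_left _ ((hmemA i).2 hfi)
          apply hi.2.2
          rw [hg]
          simp only [hiS, if_pos, hfi]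
          field_simp
      have hwitness : ∃ i0, i0 ∈ B ∧ i0 ∉ Mg := by
        rcases min_choice ((K:ℝ) * a) (1 - (K:ℝ) * b) with hmin | hmin
        · -- p = K * a ; the inf achiever goes to 0
          obtain ⟨i0, hi0S, hi0⟩ := Finset.exists_mem_eq_inf' hSne f
          have hfi0 : f i0 = a := hi0.symm
          have hnum : a - p * (K:ℝ)⁻¹ = 0 := by
            have h2 : (K:ℝ) * a * (K:ℝ)⁻¹ = a := by field_simp
            rw [hp, hmin, h2, sub_self]
          have hgi0 : g i0 = 0 := by
            rw [hg]
            simp only [hi0S, if_pos]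
            rw [hfi0, hnum, zero_div]
          refine ⟨i0, ?_, ?_⟩
          · rw [hmemB, hfi0]
            exact ⟨ha_pos.ne', ha_lt.ne⟩
          · rw [hMg, Finset.mem_filter]
            rintro ⟨-, h1', -⟩
            exact h1' hgi0
        · -- p = 1 - K * b ; the sup achiever goes to K⁻¹
          obtain ⟨i0, hi0S, hi0⟩ := Finset.exists_mem_eq_sup' hcompl_ne f
          have hfi0 : f i0 = b := hi0.symm
          have hi0notS : i0 ∉ S := (Finset.mem_sdiff.1 hi0S).2
          have hb_pos : 0 < b := by
            by_contra hb0
            push_neg at hb0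
            have hb00 : b = 0 := le_antisymm hb0 hb_nonneg
            have : p = 1 := by rw [hp, hmin, hb00]; ring
            linarith
          have hden : 1 - p = (K:ℝ) * b := by rw [hp, hmin]; ring
          have hgi0 : g i0 = (K:ℝ)⁻¹ := by
            rw [hg]
            simp only [hi0notS, if_neg, not_false_iff, sub_zero]
            rw [hfi0, hden, div_eq_iff (by positivity)]
            field_simp
          refine ⟨i0, ?_, ?_⟩
          · rw [hmemB, hfi0]
            exact ⟨hb_pos.ne', hb_lt.ne⟩
          · rw [hMg, Finset.mem_filter]
            rintro ⟨-, -, h2'⟩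
            exact h2' hgi0
      obtain ⟨i0, hi0B, hi0notMg⟩ := hwitness
      have hss : Mg ⊂ B := ⟨hsub, fun h => hi0notMg (h hi0B)⟩
      have hlt : Mg.card < m := by
        rw [hm]
        exact Finset.card_lt_card hss
      obtain ⟨s, q, T, hq0, hq1, hTcard, hrepr⟩ := ih Mg.card hlt g hg0 hg1 hgs rfl
      refine ⟨s + 1, Fin.cons p (fun j => (1 - p) * q j), Fin.cons S T, ?_, ?_, ?_, ?_⟩
      · intro j
        refine Fin.cases ?_ ?_ j
        · exact hp_pos.le
        · intro j'
          exact mul_nonneg h1p.le (hq0 j')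
      · rw [Fin.sum_cons, ← Finset.mul_sum, hq1]
        ring
      · intro j
        refine Fin.cases ?_ ?_ j
        · exact hScard
        · intro j'
          exact hTcard j'
      · intro i
        rw [Fin.sum_univ_succ]
        simp only [Fin.cons_succ, Fin.cons_zero]
        have : ∑ j : Fin s, (1 - p) * q j * (K:ℝ)⁻¹ * (if i ∈ T j then 1 else 0)
            = (1 - p) * g i := by
          rw [hrepr i, Finset.mul_sum]
          apply Finset.sum_congr rfl
          intro j _
          ring
        rw [this, hg_eq i]
        rw [mul_ite, mul_one, mul_zero]
        ring

/-- every density operator `ρ` with `H_min(N)_ρ = −log λ_max(ρ) ≥ k`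
(i.e. `λ_max(ρ) ≤ 2^{−k}`, with `K = 2^k` a positive integer) is a convex combination of
flat `k`-sources, i.e. of states `2^{−k} P` for orthogonal projections `P` of rank `2^k`. -/
theorem flat_source_decomposition
    {n : Type} [Fintype n] [DecidableEq n] [Nonempty n]
    (K : ℕ) (hK : 0 < K) (hKn : K ≤ Fintype.card n)
    (ρ : Matrix n n ℂ) (hρ : ρ.PosSemidef) (hρtr : ρ.trace = 1)
    -- H_min(N)_ρ ≥ k = log K, i.e. λ_max(ρ) ≤ 1/K = 2^{−k}
    (hmin : (((K : ℂ))⁻¹ • (1 : Matrix n n ℂ) - ρ).PosSemidef) :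
    ∃ (s : ℕ) (p : Fin s → ℝ) (P : Fin s → Matrix n n ℂ),
      (∀ j, 0 ≤ p j) ∧ (∑ j, p j = 1) ∧
      (∀ j, (P j).IsHermitian ∧ P j * P j = P j ∧ (P j).rank = K) ∧
      ρ = ∑ j, ((p j : ℂ) * ((K : ℂ))⁻¹) • P j := by
  have hH : ρ.IsHermitian := hρ.1
  set U : Matrix n n ℂ := (hH.eigenvectorUnitary : Matrix n n ℂ) with hUdef
  have hUstar : U * star U = 1 := (Matrix.mem_unitaryGroup_iff).1 hH.eigenvectorUnitary.2
  have hstarU : star U * U = 1 := (Matrix.mem_unitaryGroup_iff').1 hH.eigenvectorUnitary.2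
  have hUdet : IsUnit U.det := Matrix.isUnit_det_of_right_inverse hUstar
  have hsUdet : IsUnit (star U).det := Matrix.isUnit_det_of_right_inverse hstarU
  set lam : n → ℝ := hH.eigenvalues with hlam
  -- eigenvalues are nonnegative
  have hlam0 : ∀ i, 0 ≤ lam i := hρ.eigenvalues_nonneg
  -- eigenvalues are at most 1/K
  have hlam1 : ∀ i, lam i ≤ (K:ℝ)⁻¹ := by
    intro i
    set v : n → ℂ := ⇑(hH.eigenvectorBasis i) with hv
    have hvv : star v ⬝ᵥ v = 1 := by
      have hnorm := hH.eigenvectorBasis.orthonormal.1 i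
      have h2 : (inner ℂ (hH.eigenvectorBasis i) (hH.eigenvectorBasis i) : ℂ) = 1 := by
        rw [inner_self_eq_norm_sq_to_K, hnorm]
        norm_num
      rwa [EuclideanSpace.inner_eq_star_dotProduct, dotProduct_comm] at h2
    have hmv : ρ *ᵥ v = (lam i : ℂ) • v := by
      have := hH.mulVec_eigenvectorBasis i
      rw [← hv] at this
      rw [this]
      ext x
      simp [Pi.smul_apply, Complex.real_smul, hlam]
    have hq := hmin.dotProduct_mulVec_nonneg v
    have hcalc : star v ⬝ᵥ (((K : ℂ)⁻¹ • (1 : Matrix n n ℂ) - ρ) *ᵥ v)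
        = (K:ℂ)⁻¹ - (lam i : ℂ) := by
      rw [Matrix.sub_mulVec, Matrix.smul_mulVec, Matrix.one_mulVec, hmv,
        dotProduct_sub, dotProduct_smul, dotProduct_smul, hvv]
      simp
    rw [hcalc] at hq
    have : ((((K:ℝ)⁻¹ - lam i : ℝ)) : ℂ) = (K:ℂ)⁻¹ - (lam i : ℂ) := by push_cast; ring
    rw [← this] at hq
    rw [Complex.zero_le_real] at hq
    linarith
  -- eigenvalues sum to 1
  have hlamsum : ∑ i, lam i = 1 := by
    have htr : ρ.trace = ∑ i, (lam i : ℂ) := by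
      conv_lhs => rw [hH.spectral_theorem]
      rw [Unitary.conjStarAlgAut_apply]
      rw [Matrix.trace_mul_cycle, ← hUdef, hstarU, Matrix.one_mul, Matrix.trace_diagonal]
      rfl
    rw [hρtr] at htr
    have : ((∑ i, lam i : ℝ) : ℂ) = 1 := by push_cast; rw [htr]
    exact_mod_cast this
  obtain ⟨s, p, T, hp0, hp1, hTc, hrepr⟩ := flat_vec_decomp K hK lam hlam0 hlam1 hlamsum
  set D : Fin s → Matrix n n ℂ := fun j => diagonal (fun i => if i ∈ T j then (1:ℂ) else 0)
    with hD
  refine ⟨s, p, fun j => U * D j * star U, hp0, hp1, ?_, ?_⟩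
  · intro j
    refine ⟨?_, ?_, ?_⟩
    · -- Hermitian
      have hDherm : (D j).IsHermitian := by
        rw [hD]
        exact Matrix.isHermitian_diagonal_of_self_adjoint _
          (funext fun i => by by_cases h : i ∈ T j <;> simp [h])
      simpa [Matrix.star_eq_conjTranspose] using
        Matrix.isHermitian_mul_mul_conjTranspose U hDherm
    · -- idempotent
      have hDD : D j * D j = D j := by
        rw [hD]
        simp only [Matrix.diagonal_mul_diagonal]
        congr 1
        ext i
        by_cases h : i ∈ T j <;> simp [Matrix.diagonal_apply, h]
      calc U * D j * star U * (U * D j * star U)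
          = U * D j * (star U * U) * D j * star U := by
            simp only [Matrix.mul_assoc]
        _ = U * (D j * D j) * star U := by rw [hstarU]; simp only [Matrix.mul_assoc, Matrix.mul_one]
        _ = U * D j * star U := by rw [hDD, Matrix.mul_assoc]
    · -- rank
      rw [Matrix.rank_mul_eq_left_of_isUnit_det (star U) (U * D j) hsUdet,
        Matrix.rank_mul_eq_right_of_isUnit_det U (D j) hUdet, hD]
      rw [Matrix.rank_diagonal]
      rw [Fintype.card_subtype]
      rw [← hTc j]
      congr 1
      ext i
      by_cases h : i ∈ T j <;> simp [h]
  · -- the decomposition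
    have hdiag : ∑ j, ((p j : ℂ) * (K:ℂ)⁻¹) • D j
        = diagonal (fun i => (lam i : ℂ)) := by
      ext i i'
      rw [Matrix.sum_apply]
      by_cases h : i = i'
      · subst h
        simp only [hD, Matrix.smul_apply, Matrix.diagonal_apply_eq, Matrix.diagonal_apply_eq,
          smul_eq_mul]
        have := congrArg (fun x : ℝ => (x : ℂ)) (hrepr i)
        push_cast at this
        rw [this]
        apply Finset.sum_congr rfl
        intro j _
        by_cases hij : i ∈ T j <;> simp [hij]
      · simp only [hD, Matrix.smul_apply, Matrix.diagonal_apply_ne _ h, smul_zero,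
          Finset.sum_const_zero]
    calc ρ = U * diagonal (fun i => (lam i : ℂ)) * star U := by
          conv_lhs => rw [hH.spectral_theorem]
          rfl
    _ = U * (∑ j, ((p j : ℂ) * (K:ℂ)⁻¹) • D j) * star U := by rw [hdiag]
    _ = ∑ j, ((p j : ℂ) * (K:ℂ)⁻¹) • (U * D j * star U) := by
          rw [Matrix.mul_sum, Matrix.sum_mul]
          apply Finset.sum_congr rfl
          intro j _
          rw [Matrix.mul_smul, Matrix.smul_mul]
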